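/- Soundness of the Dialectica while rule (Theorem 6, W_≺): Let X, V be types, r a well-founded relation on X, φ : X → Prop a decidable predicate, a : X → X such that for all x, φ x implies r (a x) x, α : X → V → V, and P : X → V → Prop. Define whileDo : X → X and whileBack : X → V → V by well-founded recursion as whileDo x = if φ x then whileDo (a x) else x and whileBack x v = if φ x then α x (whileBack (a x) v) else v. Suppose that for all x : X and v : V, if P x (α x v) and φ x then P (a x) v. Then for all x : X and v : V: P x (whileBack x v) implies P (whileDo x) v ∧ ¬ φ (whileDo x). -/
import Mathlib

/-- The forward while operator, defined by well-founded recursion on `r`. -/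
noncomputable def whileDo {X : Type*} (r : X → X → Prop) (hwf : WellFounded r)
    (φ : X → Prop) [DecidablePred φ] (a : X → X) (hdesc : ∀ x, φ x → r (a x) x) :
    X → X :=
  hwf.fix (fun x ih => if hx : φ x then ih (a x) (hdesc x hx) else x)

/-- The backward while operator, defined by well-founded recursion on `r` in its
first argument. -/
noncomputable def whileBack {X V : Type*} (r : X → X → Prop) (hwf : WellFounded r)
    (φ : X → Prop) [DecidablePred φ] (a : X → X) (hdesc : ∀ x, φ x → r (a x) x)
    (α : X → V → V) : X → V → V :=
  hwf.fix (fun x ih v => if hx : φ x then α x (ih (a x) (hdesc x hx) v) else v)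

/-- Soundness of the Dialectica while rule (Theorem 6, W_≺). -/
theorem dialectica_while_sound {X V : Type*} (r : X → X → Prop) (hwf : WellFounded r)
    (φ : X → Prop) [DecidablePred φ] (a : X → X) (hdesc : ∀ x, φ x → r (a x) x)
    (α : X → V → V) (P : X → V → Prop)
    (h : ∀ (x : X) (v : V), P x (α x v) → φ x → P (a x) v) :
    ∀ (x : X) (v : V),
      P x (whileBack r hwf φ a hdesc α x v) →
        P (whileDo r hwf φ a hdesc x) v ∧ ¬ φ (whileDo r hwf φ a hdesc x) := by
  intro x
  induction x using hwf.induction with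
  | _ x ih =>
    intro v hp
    rw [whileDo, hwf.fix_eq] at *
    rw [whileBack, hwf.fix_eq] at hp
    by_cases hx : φ x
    · rw [dif_pos hx] at hp ⊢
      exact ih (a x) (hdesc x hx) v (h x _ hp hx)
    · rw [dif_neg hx] at hp ⊢
      exact ⟨hp, hx⟩
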